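/- For every L > 0, G > 0 and every I ∈ ℝ, the real 4×4 matrix M with rows: (1/L³, −3/L⁴, 0, 0); (1/(4G⁴L³), −3/(4G⁴L⁴), −1/(G⁵L³), 0); (√(5/2)/(3G⁴L³), −√(5/2)/(G⁴L⁴), −2√10/(3G⁵L³), 0); (199I/(96G⁵L³), −199I/(32G⁵L⁴), −995I/(96G⁶L³), 199/(96G⁵L³)) has rank exactly 3. -/

import Mathlib

set_option maxHeartbeats 1000000


open Real Matrix

/-- The frequency matrix `M_Ω(L,G,I)` around the relative equilibria
`E₃,₄ = (±√3G/2, ∓G/2, 0)` of the twice-reduced system has rank exactly 3 (Han–Li–Yi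
nondegeneracy). -/
theorem frequency_matrix_twice_reduced_E34_rank (L G I : ℝ) (hL : 0 < L) (hG : 0 < G) :
    (!![1 / L ^ 3, -3 / L ^ 4, 0, 0;
        1 / (4 * G ^ 4 * L ^ 3), -3 / (4 * G ^ 4 * L ^ 4), -1 / (G ^ 5 * L ^ 3), 0;
        Real.sqrt (5 / 2) / (3 * G ^ 4 * L ^ 3), -(Real.sqrt (5 / 2)) / (G ^ 4 * L ^ 4),
          -2 * Real.sqrt 10 / (3 * G ^ 5 * L ^ 3), 0;
        199 * I / (96 * G ^ 5 * L ^ 3), -199 * I / (32 * G ^ 5 * L ^ 4),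
          -995 * I / (96 * G ^ 6 * L ^ 3), 199 / (96 * G ^ 5 * L ^ 3)] :
      Matrix (Fin 4) (Fin 4) ℝ).rank = 3 := by
  have hL0 : L ≠ 0 := ne_of_gt hL
  have hG0 : G ≠ 0 := ne_of_gt hG
  have h10 : Real.sqrt 10 = 2 * Real.sqrt (5 / 2) := by
    rw [show (10 : ℝ) = 2 ^ 2 * (5 / 2) by norm_num,
      Real.sqrt_mul (by positivity), Real.sqrt_sq (by norm_num : (0:ℝ) ≤ 2)]
  set s : ℝ := Real.sqrt (5 / 2) with hs
  set M : Matrix (Fin 4) (Fin 4) ℝ :=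
    !![1 / L ^ 3, -3 / L ^ 4, 0, 0;
        1 / (4 * G ^ 4 * L ^ 3), -3 / (4 * G ^ 4 * L ^ 4), -1 / (G ^ 5 * L ^ 3), 0;
        s / (3 * G ^ 4 * L ^ 3), -s / (G ^ 4 * L ^ 4),
          -2 * Real.sqrt 10 / (3 * G ^ 5 * L ^ 3), 0;
        199 * I / (96 * G ^ 5 * L ^ 3), -199 * I / (32 * G ^ 5 * L ^ 4),
          -995 * I / (96 * G ^ 6 * L ^ 3), 199 / (96 * G ^ 5 * L ^ 3)] with hM
  apply le_antisymm
  · -- rank ≤ 3 : M = B * C with C of height 3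
    set C : Matrix (Fin 3) (Fin 4) ℝ :=
      !![1 / L ^ 3, -3 / L ^ 4, 0, 0;
          1 / (4 * G ^ 4 * L ^ 3), -3 / (4 * G ^ 4 * L ^ 4), -1 / (G ^ 5 * L ^ 3), 0;
          199 * I / (96 * G ^ 5 * L ^ 3), -199 * I / (32 * G ^ 5 * L ^ 4),
            -995 * I / (96 * G ^ 6 * L ^ 3), 199 / (96 * G ^ 5 * L ^ 3)] with hC
    set B : Matrix (Fin 4) (Fin 3) ℝ :=
      !![1, 0, 0; 0, 1, 0; 0, 4 * s / 3, 0; 0, 0, 1] with hB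
    have hfac : M = B * C := by
      ext i j
      fin_cases i <;> fin_cases j <;>
        simp [hM, hB, hC, Matrix.mul_apply, Fin.sum_univ_three, h10] <;>
        field_simp <;> ring
    calc M.rank = (B * C).rank := by rw [hfac]
      _ ≤ C.rank := Matrix.rank_mul_le_right B C
      _ ≤ 3 := by simpa using C.rank_le_card_height
  · -- 3 ≤ rank : E * (M * F) is an invertible 3×3 matrix
    set E : Matrix (Fin 3) (Fin 4) ℝ := !![1,0,0,0; 0,1,0,0; 0,0,0,1] with hE
    set F : Matrix (Fin 4) (Fin 3) ℝ := !![1,0,0; 0,0,0; 0,1,0; 0,0,1] with hF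
    have hEMF : E * (M * F) =
        !![1 / L ^ 3, 0, 0;
           1 / (4 * G ^ 4 * L ^ 3), -1 / (G ^ 5 * L ^ 3), 0;
           199 * I / (96 * G ^ 5 * L ^ 3), -995 * I / (96 * G ^ 6 * L ^ 3),
             199 / (96 * G ^ 5 * L ^ 3)] := by
      ext i j
      fin_cases i <;> fin_cases j <;>
        norm_num [hM, hE, hF, Matrix.mul_apply, Fin.sum_univ_four, Fin.sum_univ_three,
          Matrix.cons_val_two, Matrix.cons_val_three, Matrix.vecHead, Matrix.vecTail]
    have hdet : (E * (M * F)).det ≠ 0 := by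
      rw [hEMF]
      simp [Matrix.det_fin_three]
      exact ⟨hL0, hG0, hL0⟩
    have hrank3 : (E * (M * F)).rank = 3 := by
      have := Matrix.rank_of_isUnit (E * (M * F))
        ((Matrix.isUnit_iff_isUnit_det _).mpr (isUnit_iff_ne_zero.mpr hdet))
      simpa using this
    calc (3 : ℕ) = (E * (M * F)).rank := hrank3.symm
      _ ≤ (M * F).rank := Matrix.rank_mul_le_right E (M * F)
      _ ≤ M.rank := Matrix.rank_mul_le_left M F
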